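/- Every recursive classically-enhanced subsystem convolutional encoder with at least one information qubit (k_q ≥ 1) is catastrophic; that is, if for every logical input sequence of total weight one every element of its logical coset has infinite weight, then the state diagram of the encoder contains a directed cycle all of whose edges have physical labels of weight zero while some edge of the cycle has a logical label of nonzero weight. -/

import Mathlib

/-!
Pauli operators (up to phase) on a finite index set of qubits are represented by
their binary symplectic vectors: for each qubit an (x, z)-pair in 𝔽₂ × 𝔽₂.
-/

abbrev F2 := ZMod 2

abbrev Pauli (ι : Type) : Type := ι → F2 × F2

/-- The weight of a Pauli operator: the number of qubits on which it acts nontrivially. -/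
def pWeight {ι : Type} [Fintype ι] (p : Pauli ι) : ℕ :=
  (Finset.univ.filter fun i => p i ≠ 0).card

/-- A Pauli is pure-Z if its X-part vanishes. -/
def pureZ {ι : Type} (p : Pauli ι) : Prop := ∀ i, (p i).1 = 0

/-- A Pauli is pure-X if its Z-part vanishes. -/
def pureX {ι : Type} (p : Pauli ι) : Prop := ∀ i, (p i).2 = 0

/-- The binary symplectic form. -/
def sympl {ι : Type} [Fintype ι] (p q : Pauli ι) : F2 :=
  ∑ i, ((p i).1 * (q i).2 + (p i).2 * (q i).1)

/-- A classically-enhanced subsystem convolutional encoder: an invertible linear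
transformation over 𝔽₂ from the binary symplectic representation of Paulis on
(memory : information : ancilla : classical : gauge) positions to that on
(memory : physical) positions. -/
abbrev CEEnc (m kq a kc g n : ℕ) : Type :=
  Pauli (Fin m ⊕ Fin kq ⊕ Fin a ⊕ Fin kc ⊕ Fin g) ≃ₗ[F2] Pauli (Fin m ⊕ Fin n)

variable {m kq a kc g n : ℕ}

/-- Assemble the blocks (M : L_q : S : C : G) into one input vector. -/
def ceInput (M : Pauli (Fin m)) (Lq : Pauli (Fin kq)) (S : Pauli (Fin a))
    (C : Pauli (Fin kc)) (G : Pauli (Fin g)) :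
    Pauli (Fin m ⊕ Fin kq ⊕ Fin a ⊕ Fin kc ⊕ Fin g) :=
  Sum.elim M (Sum.elim Lq (Sum.elim S (Sum.elim C G)))

/-- The memory part M' of an output vector (M' : P). -/
def outMem (w : Pauli (Fin m ⊕ Fin n)) : Pauli (Fin m) := fun i => w (Sum.inl i)

/-- The physical part P of an output vector (M' : P). -/
def outPhys (w : Pauli (Fin m ⊕ Fin n)) : Pauli (Fin n) := fun i => w (Sum.inr i)

/-- Edge of the state diagram of a classically-enhanced subsystem encoder:
`M → M'` with logical label `(Lq : Lcx)` (with `Lcx` pure-X) and physical label `P`,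
witnessed by a pure-Z `Sz` on the ancillas, a pure-Z `Cz` on the classical bits and
an arbitrary `G` on the gauge qubits. -/
def CEEdge (U : CEEnc m kq a kc g n) (M M' : Pauli (Fin m)) (Lq : Pauli (Fin kq))
    (Lcx : Pauli (Fin kc)) (P : Pauli (Fin n)) : Prop :=
  pureX Lcx ∧ ∃ (Sz : Pauli (Fin a)) (Cz : Pauli (Fin kc)) (G : Pauli (Fin g)),
    pureZ Sz ∧ pureZ Cz ∧
    outMem (U (ceInput M Lq Sz (Lcx + Cz) G)) = M' ∧
    outPhys (U (ceInput M Lq Sz (Lcx + Cz) G)) = P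

/-- Catastrophicity: the state diagram contains a directed cycle all of whose edges have
physical labels of weight zero while some edge of the cycle has a logical label of
nonzero weight. -/
def CECatastrophic (U : CEEnc m kq a kc g n) : Prop :=
  ∃ ℓ : ℕ, 0 < ℓ ∧ ∃ (Ms : ZMod ℓ → Pauli (Fin m)) (Lqs : ZMod ℓ → Pauli (Fin kq))
    (Lcxs : ZMod ℓ → Pauli (Fin kc)) (Ps : ZMod ℓ → Pauli (Fin n)),
    (∀ t, CEEdge U (Ms t) (Ms (t + 1)) (Lqs t) (Lcxs t) (Ps t)) ∧
    (∀ t, pWeight (Ps t) = 0) ∧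
    (∃ t, pWeight (Lqs t) + pWeight (Lcxs t) ≠ 0)

/-- Membership of a physical output sequence in the logical coset of the logical input
sequence `((Lq t : Lcx t))_{t ∈ ℕ}`. -/
def CEInCoset (U : CEEnc m kq a kc g n) (Lq : ℕ → Pauli (Fin kq))
    (Lcx : ℕ → Pauli (Fin kc)) (P : ℕ → Pauli (Fin n)) : Prop :=
  ∃ (M : ℕ → Pauli (Fin m)) (Sz : ℕ → Pauli (Fin a)) (Cz : ℕ → Pauli (Fin kc))
    (G : ℕ → Pauli (Fin g)),
    M 0 = 0 ∧ (∀ t, pureZ (Sz t)) ∧ (∀ t, pureZ (Cz t)) ∧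
    ∀ t, M (t + 1) = outMem (U (ceInput (M t) (Lq t) (Sz t) (Lcx t + Cz t) (G t))) ∧
         P t = outPhys (U (ceInput (M t) (Lq t) (Sz t) (Lcx t + Cz t) (G t)))

/-- Recursiveness: every logical input sequence of total weight one has the property that
every element of its logical coset has infinite weight (is nonzero in infinitely many
frames). -/
def CERecursive (U : CEEnc m kq a kc g n) : Prop :=
  ∀ (Lq : ℕ → Pauli (Fin kq)) (Lcx : ℕ → Pauli (Fin kc)),
    (∀ t, pureX (Lcx t)) →
    (∃ t0 : ℕ, pWeight (Lq t0) + pWeight (Lcx t0) = 1 ∧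
      ∀ t, t ≠ t0 → Lq t = 0 ∧ Lcx t = 0) →
    ∀ P : ℕ → Pauli (Fin n), CEInCoset U Lq Lcx P → {t : ℕ | P t ≠ 0}.Infinite


/-! auxiliary -/

lemma F2.ne_zero_eq_one {c : F2} (h : c ≠ 0) : c = 1 := by revert h; revert c; decide

lemma Pauli.add_self {ι : Type} (p : Pauli ι) : p + p = 0 := by
  funext i
  show p i + p i = 0
  have h : ∀ c : F2, c + c = 0 := by decide
  rcases hp : p i with ⟨x, z⟩
  show (x + x, z + z) = (0, 0)
  rw [h x, h z]

lemma pWeight_eq_zero_iff {ι : Type} [Fintype ι] (p : Pauli ι) : pWeight p = 0 ↔ p = 0 := by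
  constructor
  · intro h
    funext i
    have h2 := Finset.card_eq_zero.mp h
    by_contra hi
    have : i ∈ Finset.univ.filter (fun i => p i ≠ 0) := by
      simp only [Finset.mem_filter, Finset.mem_univ, true_and]
      exact hi
    rw [h2] at this
    exact absurd this (Finset.notMem_empty i)
  · intro h; subst h; simp [pWeight]

lemma pWeight_zero {ι : Type} [Fintype ι] : pWeight (0 : Pauli ι) = 0 :=
  (pWeight_eq_zero_iff 0).2 rfl

lemma pureZ_zero {ι : Type} : pureZ (0 : Pauli ι) := fun _ => rfl
lemma pureX_zero {ι : Type} : pureX (0 : Pauli ι) := fun _ => rfl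
lemma pureZ_add {ι : Type} {p q : Pauli ι} (hp : pureZ p) (hq : pureZ q) : pureZ (p + q) := by
  intro i
  show ((p i) + (q i)).1 = 0
  rw [Prod.fst_add, hp i, hq i, add_zero]

lemma sympl_zero_left {ι : Type} [Fintype ι] (q : Pauli ι) : sympl 0 q = 0 := by simp [sympl]
lemma sympl_zero_right {ι : Type} [Fintype ι] (p : Pauli ι) : sympl p 0 = 0 := by simp [sympl]

lemma sympl_sumElim {ι κ : Type} [Fintype ι] [Fintype κ] (a c : Pauli ι) (b d : Pauli κ) :
    sympl (Sum.elim a b) (Sum.elim c d) = sympl a c + sympl b d := by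
  simp [sympl, Fintype.sum_sum_type]

lemma sympl_single_zx {ι : Type} [Fintype ι] [DecidableEq ι] (i : ι) (w : Pauli ι) :
    sympl (Pi.single i ((0 : F2), (1 : F2))) w = (w i).1 := by
  unfold sympl
  rw [Fintype.sum_eq_single i]
  · rw [Pi.single_eq_same]; simp
  · intro j hj; rw [Pi.single_eq_of_ne hj]; simp

lemma sympl_single_xz {ι : Type} [Fintype ι] [DecidableEq ι] (i : ι) (w : Pauli ι) :
    sympl (Pi.single i ((1 : F2), (0 : F2))) w = (w i).2 := by
  unfold sympl
  rw [Fintype.sum_eq_single i]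
  · rw [Pi.single_eq_same]; simp
  · intro j hj; rw [Pi.single_eq_of_ne hj]; simp

lemma pureZ_single_z {ι : Type} [DecidableEq ι] (i : ι) :
    pureZ (Pi.single i ((0 : F2), (1 : F2)) : Pauli ι) := by
  intro j
  rcases eq_or_ne j i with rfl | h
  · rw [Pi.single_eq_same]
  · rw [Pi.single_eq_of_ne h]; rfl

/-! components of input vectors -/

def wM (w : Pauli (Fin m ⊕ Fin kq ⊕ Fin a ⊕ Fin kc ⊕ Fin g)) : Pauli (Fin m) :=
  fun i => w (Sum.inl i)
def wI (w : Pauli (Fin m ⊕ Fin kq ⊕ Fin a ⊕ Fin kc ⊕ Fin g)) : Pauli (Fin kq) :=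
  fun i => w (Sum.inr (Sum.inl i))
def wA (w : Pauli (Fin m ⊕ Fin kq ⊕ Fin a ⊕ Fin kc ⊕ Fin g)) : Pauli (Fin a) :=
  fun i => w (Sum.inr (Sum.inr (Sum.inl i)))
def wK (w : Pauli (Fin m ⊕ Fin kq ⊕ Fin a ⊕ Fin kc ⊕ Fin g)) : Pauli (Fin kc) :=
  fun i => w (Sum.inr (Sum.inr (Sum.inr (Sum.inl i))))
def wG (w : Pauli (Fin m ⊕ Fin kq ⊕ Fin a ⊕ Fin kc ⊕ Fin g)) : Pauli (Fin g) :=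
  fun i => w (Sum.inr (Sum.inr (Sum.inr (Sum.inr i))))

lemma ceInput_eta (w : Pauli (Fin m ⊕ Fin kq ⊕ Fin a ⊕ Fin kc ⊕ Fin g)) :
    ceInput (wM w) (wI w) (wA w) (wK w) (wG w) = w := by
  funext i
  rcases i with i | i | i | i | i <;> rfl

lemma ceInput_zero :
    (ceInput 0 0 0 0 0 : Pauli (Fin m ⊕ Fin kq ⊕ Fin a ⊕ Fin kc ⊕ Fin g)) = 0 := by
  funext i
  rcases i with i | i | i | i | i <;> rfl

lemma ceInput_add (M M' : Pauli (Fin m)) (L L' : Pauli (Fin kq)) (S S' : Pauli (Fin a))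
    (C C' : Pauli (Fin kc)) (G G' : Pauli (Fin g)) :
    ceInput (M + M') (L + L') (S + S') (C + C') (G + G')
      = ceInput M L S C G + ceInput M' L' S' C' G' := by
  funext i
  rcases i with i | i | i | i | i <;> rfl

lemma ceInput_split (M : Pauli (Fin m)) (L : Pauli (Fin kq)) (S : Pauli (Fin a))
    (C : Pauli (Fin kc)) (G : Pauli (Fin g)) :
    ceInput M L S C G = ceInput M 0 0 0 0 + ceInput 0 L 0 0 0 + ceInput 0 0 S C G := by
  funext i
  rcases i with i | i | i | i | i <;> simp [ceInput]

lemma outMem_add (w w' : Pauli (Fin m ⊕ Fin n)) :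
    outMem (w + w') = outMem w + outMem w' := rfl
lemma outMem_zero : outMem (0 : Pauli (Fin m ⊕ Fin n)) = 0 := rfl
lemma sumElim_out (w : Pauli (Fin m ⊕ Fin n)) : Sum.elim (outMem w) (outPhys w) = w := by
  funext i; cases i <;> rfl

/-! forward dynamics -/

def Atil (U : CEEnc m kq a kc g n) (M : Pauli (Fin m)) : Pauli (Fin m) :=
  outMem (U (ceInput M 0 0 0 0))
def Cmap (U : CEEnc m kq a kc g n) (e : Pauli (Fin kq)) : Pauli (Fin m) :=
  outMem (U (ceInput 0 e 0 0 0))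
def Emap (U : CEEnc m kq a kc g n) (sz : Pauli (Fin a)) (cz : Pauli (Fin kc))
    (gg : Pauli (Fin g)) : Pauli (Fin m) :=
  outMem (U (ceInput 0 0 sz cz gg))

lemma Atil_zero (U : CEEnc m kq a kc g n) : Atil U 0 = 0 := by
  rw [Atil, ceInput_zero, map_zero, outMem_zero]
lemma Cmap_zero (U : CEEnc m kq a kc g n) : Cmap U 0 = 0 := by
  rw [Cmap, ceInput_zero, map_zero, outMem_zero]
lemma Emap_zero (U : CEEnc m kq a kc g n) : Emap U 0 0 0 = 0 := by
  rw [Emap, ceInput_zero, map_zero, outMem_zero]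

lemma Atil_add (U : CEEnc m kq a kc g n) (M M' : Pauli (Fin m)) :
    Atil U (M + M') = Atil U M + Atil U M' := by
  unfold Atil
  rw [show (ceInput (M + M') 0 0 0 0 : Pauli (Fin m ⊕ Fin kq ⊕ Fin a ⊕ Fin kc ⊕ Fin g))
      = ceInput M 0 0 0 0 + ceInput M' 0 0 0 0 by
    rw [← ceInput_add]; norm_num]
  rw [map_add, outMem_add]

lemma Emap_add (U : CEEnc m kq a kc g n) (sz sz' : Pauli (Fin a)) (cz cz' : Pauli (Fin kc))
    (gg gg' : Pauli (Fin g)) :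
    Emap U (sz + sz') (cz + cz') (gg + gg') = Emap U sz cz gg + Emap U sz' cz' gg' := by
  unfold Emap
  rw [show (ceInput 0 0 (sz + sz') (cz + cz') (gg + gg')
        : Pauli (Fin m ⊕ Fin kq ⊕ Fin a ⊕ Fin kc ⊕ Fin g))
      = ceInput 0 0 sz cz gg + ceInput 0 0 sz' cz' gg' by
    rw [← ceInput_add]; norm_num]
  rw [map_add, outMem_add]

lemma outMem_step (U : CEEnc m kq a kc g n) (M : Pauli (Fin m)) (L : Pauli (Fin kq))
    (sz : Pauli (Fin a)) (c : Pauli (Fin kc)) (gg : Pauli (Fin g)) :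
    outMem (U (ceInput M L sz c gg)) = Atil U M + Cmap U L + Emap U sz c gg := by
  rw [ceInput_split, map_add, map_add, outMem_add, outMem_add]; rfl

lemma Atil_iter_add (U : CEEnc m kq a kc g n) (t : ℕ) (x y : Pauli (Fin m)) :
    (Atil U)^[t] (x + y) = (Atil U)^[t] x + (Atil U)^[t] y := by
  induction t with
  | zero => rfl
  | succ t ih =>
      rw [Function.iterate_succ_apply', Function.iterate_succ_apply',
        Function.iterate_succ_apply', ih, Atil_add]

lemma Atil_iter_zero (U : CEEnc m kq a kc g n) (t : ℕ) : (Atil U)^[t] (0 : Pauli (Fin m)) = 0 := by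
  induction t with
  | zero => rfl
  | succ t ih => rw [Function.iterate_succ_apply', ih, Atil_zero]

/-! reachable sets -/

def Reach (U : CEEnc m kq a kc g n) : ℕ → Set (Pauli (Fin m))
  | 0 => {0}
  | (w + 1) => {x | ∃ q ∈ Reach U w, ∃ sz cz gg, pureZ sz ∧ pureZ cz ∧
      x = Atil U q + Emap U sz cz gg}

lemma zero_mem_Reach (U : CEEnc m kq a kc g n) : ∀ w, (0 : Pauli (Fin m)) ∈ Reach U w := by
  intro w
  induction w with
  | zero => rfl
  | succ w ih =>
      exact ⟨0, ih, 0, 0, 0, pureZ_zero, pureZ_zero, by rw [Atil_zero, Emap_zero, add_zero]⟩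

lemma Reach_succ_subset (U : CEEnc m kq a kc g n) : ∀ w, Reach U w ⊆ Reach U (w + 1) := by
  intro w
  induction w with
  | zero =>
      intro x hx
      have hx0 : x = 0 := hx
      subst hx0
      exact zero_mem_Reach U 1
  | succ w ih =>
      rintro x ⟨q, hq, sz, cz, gg, hsz, hcz, rfl⟩
      exact ⟨q, ih hq, sz, cz, gg, hsz, hcz, rfl⟩

lemma Reach_mono (U : CEEnc m kq a kc g n) {w w' : ℕ} (h : w ≤ w') :
    Reach U w ⊆ Reach U w' := by
  induction h with
  | refl => exact fun x hx => hx
  | step h ih => exact fun x hx => Reach_succ_subset U _ (ih hx)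

lemma Reach_add (U : CEEnc m kq a kc g n) : ∀ w (x y : Pauli (Fin m)),
    x ∈ Reach U w → y ∈ Reach U w → x + y ∈ Reach U w := by
  intro w
  induction w with
  | zero =>
      intro x y hx hy
      have hx0 : x = 0 := hx
      have hy0 : y = 0 := hy
      subst hx0; subst hy0
      rw [add_zero]; rfl
  | succ w ih =>
      rintro x y ⟨q, hq, sz, cz, gg, hsz, hcz, rfl⟩ ⟨q', hq', sz', cz', gg', hsz', hcz', rfl⟩
      refine ⟨q + q', ih q q' hq hq', sz + sz', cz + cz', gg + gg',
        pureZ_add hsz hsz', pureZ_add hcz hcz', ?_⟩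
      rw [Atil_add, Emap_add]
      abel

lemma Reach_stab (U : CEEnc m kq a kc g n) :
    ∃ t0, ∀ w, Reach U (t0 + w) = Reach U t0 := by
  obtain ⟨i, j, hne, hij⟩ := Finite.exists_ne_map_eq_of_infinite (fun w => Reach U w)
  have main : ∀ i j : ℕ, i < j → Reach U i = Reach U j →
      ∃ t0, ∀ w, Reach U (t0 + w) = Reach U t0 := by
    intro i j hlt heq
    have key : Reach U (i + 1) = Reach U i := by
      apply Set.Subset.antisymm
      · intro x hx
        have h1 : Reach U (i + 1) ⊆ Reach U j := Reach_mono U (by omega)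
        rw [← heq] at h1
        exact h1 hx
      · exact Reach_succ_subset U i
    refine ⟨i, ?_⟩
    intro w
    induction w with
    | zero => rfl
    | succ w ih =>
        have : Reach U (i + w + 1) = {x | ∃ q ∈ Reach U (i + w), ∃ sz cz gg,
            pureZ sz ∧ pureZ cz ∧ x = Atil U q + Emap U sz cz gg} := rfl
        rw [show i + (w + 1) = (i + w) + 1 by omega, this, ih]
        calc {x | ∃ q ∈ Reach U i, ∃ sz cz gg, pureZ sz ∧ pureZ cz ∧
              x = Atil U q + Emap U sz cz gg}
            = Reach U (i + 1) := rfl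
          _ = Reach U i := key
  rcases hne.lt_or_gt with h | h
  · exact main i j h hij
  · exact main j i h hij.symm

/-! trajectory with frees, zero logical input -/

def ptraj (U : CEEnc m kq a kc g n) (x : Pauli (Fin m)) (sz : ℕ → Pauli (Fin a))
    (cz : ℕ → Pauli (Fin kc)) (gg : ℕ → Pauli (Fin g)) : ℕ → Pauli (Fin m)
  | 0 => x
  | (j + 1) => Atil U (ptraj U x sz cz gg j) + Emap U (sz j) (cz j) (gg j)

lemma ptraj_congr (U : CEEnc m kq a kc g n) (x : Pauli (Fin m))
    {sz sz' : ℕ → Pauli (Fin a)} {cz cz' : ℕ → Pauli (Fin kc)} {gg gg' : ℕ → Pauli (Fin g)} :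
    ∀ w, (∀ j, j < w → sz j = sz' j ∧ cz j = cz' j ∧ gg j = gg' j) →
      ptraj U x sz cz gg w = ptraj U x sz' cz' gg' w := by
  intro w
  induction w with
  | zero => intro _; rfl
  | succ w ih =>
      intro h
      show Atil U (ptraj U x sz cz gg w) + Emap U (sz w) (cz w) (gg w) = _
      obtain ⟨h1, h2, h3⟩ := h w (by omega)
      rw [ih (fun j hj => h j (by omega)), h1, h2, h3]
      rfl

lemma reach_realize (U : CEEnc m kq a kc g n) :
    ∀ w, ∀ q ∈ Reach U w, ∀ x, ∃ (sz : ℕ → Pauli (Fin a)) (cz : ℕ → Pauli (Fin kc))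
      (gg : ℕ → Pauli (Fin g)), (∀ j, pureZ (sz j)) ∧ (∀ j, pureZ (cz j)) ∧
      ptraj U x sz cz gg w = (Atil U)^[w] x + q := by
  intro w
  induction w with
  | zero =>
      intro q hq x
      have hq0 : q = 0 := hq
      subst hq0
      exact ⟨0, 0, 0, fun _ => pureZ_zero, fun _ => pureZ_zero, by
        show x = (Atil U)^[0] x + 0
        rw [add_zero]; rfl⟩
  | succ w ih =>
      rintro q ⟨q', hq', szf, czf, ggf, hszf, hczf, rfl⟩ x
      obtain ⟨sz, cz, gg, hsz, hcz, hp⟩ := ih q' hq' x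
      refine ⟨fun j => if j = w then szf else sz j, fun j => if j = w then czf else cz j,
        fun j => if j = w then ggf else gg j, ?_, ?_, ?_⟩
      · intro j; by_cases hj : j = w <;> simp [hj, hszf, hsz]
      · intro j; by_cases hj : j = w <;> simp [hj, hczf, hcz]
      · have hc : ptraj U x (fun j => if j = w then szf else sz j)
            (fun j => if j = w then czf else cz j) (fun j => if j = w then ggf else gg j) w
            = ptraj U x sz cz gg w := by
          apply ptraj_congr U x w
          intro j hj
          have hjw : j ≠ w := by omega
          exact ⟨by simp [hjw], by simp [hjw], by simp [hjw]⟩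
        show Atil U (ptraj U x _ _ _ w) + Emap U _ _ _ = _
        rw [hc, hp]
        simp only [if_pos rfl]
        rw [Atil_add, Function.iterate_succ_apply']
        abel

/-! iterates of a self-map of a finite type: idempotent power -/

lemma exists_pow_idem {α : Type} [Finite α] (f : α → α) :
    ∃ K, 0 < K ∧ ∀ x, f^[K] (f^[K] x) = f^[K] x := by
  obtain ⟨i, j, hne, hij⟩ := Finite.exists_ne_map_eq_of_infinite (fun t : ℕ => f^[t])
  have main : ∀ i j : ℕ, i < j → f^[i] = f^[j] →
      ∃ K, 0 < K ∧ ∀ x, f^[K] (f^[K] x) = f^[K] x := by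
    intro i j hlt heq
    set d := j - i with hd
    have hdpos : 0 < d := by omega
    have hji : j = i + d := by omega
    have hstep : ∀ w, f^[w + j] = f^[w + i] := by
      intro w
      rw [Function.iterate_add, Function.iterate_add, heq]
    have claim : ∀ c w, f^[i + w + c * d] = f^[i + w] := by
      intro c
      induction c with
      | zero => intro w; norm_num
      | succ c ih =>
          intro w
          have hE : i + w + (c + 1) * d = (w + c * d) + j := by rw [hji]; ring
          rw [hE, hstep (w + c * d), show (w + c * d) + i = i + (w + c * d) by ring,
            show i + (w + c * d) = i + w + c * d by ring, ih w]
    obtain ⟨B, hBdef⟩ : ∃ B, B = (i + 1) * d := ⟨_, rfl⟩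
    have hBpos : 0 < B := by rw [hBdef]; positivity
    have hBi : i ≤ B := by
      rw [hBdef]
      calc i = i * 1 := (mul_one i).symm
        _ ≤ i * d := Nat.mul_le_mul_left i hdpos
        _ ≤ (i + 1) * d := Nat.mul_le_mul_right d (by omega)
    have claim2 : ∀ w, f^[i + w + B] = f^[i + w] := by
      intro w; rw [hBdef]; exact claim (i + 1) w
    refine ⟨B, hBpos, ?_⟩
    intro x
    rw [← Function.iterate_add_apply, show B + B = i + (B - i) + B by omega,
      claim2 (B - i), show i + (B - i) = B by omega]
  rcases hne.lt_or_gt with h | h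
  · exact main i j h hij
  · exact main j i h hij.symm

/-! backward maps -/

def back (U : CEEnc m kq a kc g n) (M' : Pauli (Fin m)) :
    Pauli (Fin m ⊕ Fin kq ⊕ Fin a ⊕ Fin kc ⊕ Fin g) :=
  U.symm (Sum.elim M' 0)
def pim (U : CEEnc m kq a kc g n) (M' : Pauli (Fin m)) : Pauli (Fin m) := wM (back U M')
def iom (U : CEEnc m kq a kc g n) (M' : Pauli (Fin m)) : Pauli (Fin kq) := wI (back U M')
def alm (U : CEEnc m kq a kc g n) (M' : Pauli (Fin m)) : Pauli (Fin a) := wA (back U M')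
def kam (U : CEEnc m kq a kc g n) (M' : Pauli (Fin m)) : Pauli (Fin kc) := wK (back U M')
def gam (U : CEEnc m kq a kc g n) (M' : Pauli (Fin m)) : Pauli (Fin g) := wG (back U M')

lemma sympl_back (U : CEEnc m kq a kc g n)
    (hsymp : ∀ v w, sympl (U v) (U w) = sympl v w)
    (v : Pauli (Fin m ⊕ Fin kq ⊕ Fin a ⊕ Fin kc ⊕ Fin g)) (χ : Pauli (Fin m)) :
    sympl v (back U χ) = sympl (outMem (U v)) χ := by
  have h1 := hsymp v (back U χ)
  rw [show U (back U χ) = Sum.elim χ 0 from U.apply_symm_apply _] at h1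
  rw [← h1]
  conv_lhs => rw [← sumElim_out (U v)]
  rw [sympl_sumElim, sympl_zero_right, add_zero]

lemma sympl_ceInput (Mv : Pauli (Fin m)) (Lv : Pauli (Fin kq)) (Sv : Pauli (Fin a))
    (Cv : Pauli (Fin kc)) (Gv : Pauli (Fin g))
    (w : Pauli (Fin m ⊕ Fin kq ⊕ Fin a ⊕ Fin kc ⊕ Fin g)) :
    sympl (ceInput Mv Lv Sv Cv Gv) w
      = sympl Mv (wM w) + sympl Lv (wI w) + sympl Sv (wA w) + sympl Cv (wK w)
        + sympl Gv (wG w) := by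
  conv_lhs => rw [← ceInput_eta w]
  unfold ceInput
  rw [sympl_sumElim, sympl_sumElim, sympl_sumElim, sympl_sumElim]
  ring

lemma sympl_Atil (U : CEEnc m kq a kc g n)
    (hsymp : ∀ v w, sympl (U v) (U w) = sympl v w) (M χ : Pauli (Fin m)) :
    sympl (Atil U M) χ = sympl M (pim U χ) := by
  have h := sympl_back U hsymp (ceInput M 0 0 0 0) χ
  rw [sympl_ceInput] at h
  simp only [sympl_zero_left, add_zero] at h
  rw [Atil, ← h]
  rfl

lemma sympl_Cmap (U : CEEnc m kq a kc g n)
    (hsymp : ∀ v w, sympl (U v) (U w) = sympl v w) (e : Pauli (Fin kq)) (χ : Pauli (Fin m)) :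
    sympl (Cmap U e) χ = sympl e (iom U χ) := by
  have h := sympl_back U hsymp (ceInput 0 e 0 0 0) χ
  rw [sympl_ceInput] at h
  simp only [sympl_zero_left, add_zero, zero_add] at h
  rw [Cmap, ← h]
  rfl

lemma sympl_Emap (U : CEEnc m kq a kc g n)
    (hsymp : ∀ v w, sympl (U v) (U w) = sympl v w) (sz : Pauli (Fin a)) (cz : Pauli (Fin kc))
    (gg : Pauli (Fin g)) (χ : Pauli (Fin m)) :
    sympl (Emap U sz cz gg) χ
      = sympl sz (alm U χ) + sympl cz (kam U χ) + sympl gg (gam U χ) := by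
  have h := sympl_back U hsymp (ceInput 0 0 sz cz gg) χ
  rw [sympl_ceInput] at h
  simp only [sympl_zero_left, zero_add] at h
  rw [Emap, ← h]
  rfl

lemma sympl_Atil_iter (U : CEEnc m kq a kc g n)
    (hsymp : ∀ v w, sympl (U v) (U w) = sympl v w) (t : ℕ) (M χ : Pauli (Fin m)) :
    sympl ((Atil U)^[t] M) χ = sympl M ((pim U)^[t] χ) := by
  induction t generalizing M with
  | zero => rfl
  | succ t ih =>
      rw [Function.iterate_succ_apply, ih, sympl_Atil U hsymp,
        ← Function.iterate_succ_apply' (pim U) t χ]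

lemma back_edge (U : CEEnc m kq a kc g n) (M' : Pauli (Fin m))
    (hα : pureZ (alm U M')) (hκ : pureZ (kam U M')) :
    CEEdge U (pim U M') M' (iom U M') 0 0 := by
  refine ⟨pureX_zero, alm U M', kam U M', gam U M', hα, hκ, ?_, ?_⟩ <;>
  · rw [zero_add,
      show ceInput (pim U M') (iom U M') (alm U M') (kam U M') (gam U M') = back U M'
        from ceInput_eta _,
      show U (back U M') = Sum.elim M' 0 from U.apply_symm_apply _]
    rfl

/-! silencing: if the impulse response can be steered to `0`, recursiveness fails -/

lemma silencing (U : CEEnc m kq a kc g n) (hrec : CERecursive U)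
    {t0 : ℕ} (ht0 : ∀ w, Reach U (t0 + w) = Reach U t0)
    (e : Pauli (Fin kq)) (he : pWeight e = 1) (K : ℕ)
    (hin : ∃ s, (Atil U)^[s] ((Atil U)^[K] (Cmap U e)) ∈ Reach U t0) : False := by
  classical
  obtain ⟨s, hs⟩ := hin
  have hRA : ∀ x ∈ Reach U t0, Atil U x ∈ Reach U t0 := by
    intro x hx
    have h1 : Atil U x ∈ Reach U (t0 + 1) :=
      ⟨x, hx, 0, 0, 0, pureZ_zero, pureZ_zero, by rw [Emap_zero, add_zero]⟩
    rwa [ht0 1] at h1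
  have hRAiter : ∀ (u : ℕ), ∀ x ∈ Reach U t0, (Atil U)^[u] x ∈ Reach U t0 := by
    intro u
    induction u with
    | zero => intro x hx; exact hx
    | succ u ih =>
        intro x hx
        rw [Function.iterate_succ_apply']
        exact hRA _ (ih x hx)
  set T := s + K with hT
  set Ce := Cmap U e with hCe
  have hx : (Atil U)^[T] Ce ∈ Reach U t0 := by
    rw [hT, Function.iterate_add_apply]
    exact hs
  set x := (Atil U)^[T] Ce with hxdef
  have hq : (Atil U)^[t0] x ∈ Reach U t0 := hRAiter t0 x hx
  obtain ⟨szR, czR, ggR, hszR, hczR, hreal⟩ := reach_realize U t0 _ hq x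
  have hptraj0 : ptraj U x szR czR ggR t0 = 0 := by
    rw [hreal, Pauli.add_self]
  -- input sequences
  set Lq : ℕ → Pauli (Fin kq) := fun τ => if τ = 0 then e else 0 with hLqd
  set Sz : ℕ → Pauli (Fin a) :=
    fun τ => if T + 1 ≤ τ ∧ τ < T + 1 + t0 then szR (τ - (T + 1)) else 0 with hSzd
  set Cz : ℕ → Pauli (Fin kc) :=
    fun τ => if T + 1 ≤ τ ∧ τ < T + 1 + t0 then czR (τ - (T + 1)) else 0 with hCzd
  set Gg : ℕ → Pauli (Fin g) :=
    fun τ => if T + 1 ≤ τ ∧ τ < T + 1 + t0 then ggR (τ - (T + 1)) else 0 with hGgd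
  set M : ℕ → Pauli (Fin m) := fun τ => Nat.rec (motive := fun _ => Pauli (Fin m)) 0
      (fun τ' ih => outMem (U (ceInput ih (Lq τ') (Sz τ') (0 + Cz τ') (Gg τ')))) τ with hMd
  set P : ℕ → Pauli (Fin n) :=
    fun τ => outPhys (U (ceInput (M τ) (Lq τ) (Sz τ) (0 + Cz τ) (Gg τ))) with hPd
  have hM0 : M 0 = 0 := rfl
  have hMsucc : ∀ τ, M (τ + 1)
      = outMem (U (ceInput (M τ) (Lq τ) (Sz τ) (0 + Cz τ) (Gg τ))) := fun τ => rfl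
  have hstepM : ∀ τ, M (τ + 1)
      = Atil U (M τ) + Cmap U (Lq τ) + Emap U (Sz τ) (0 + Cz τ) (Gg τ) := by
    intro τ
    rw [hMsucc τ]
    exact outMem_step U (M τ) (Lq τ) (Sz τ) (0 + Cz τ) (Gg τ)
  have hLq_pos : ∀ τ, τ ≠ 0 → Lq τ = 0 := by
    intro τ h
    rw [hLqd]
    simp [h]
  have hSz_out : ∀ τ, ¬(T + 1 ≤ τ ∧ τ < T + 1 + t0) → Sz τ = 0 ∧ Cz τ = 0 ∧ Gg τ = 0 := by
    intro τ h
    rw [hSzd, hCzd, hGgd]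
    simp only [h, ↓reduceIte, eq_self, and_self]
  have hzero_step : ∀ τ, τ ≠ 0 → ¬(T + 1 ≤ τ ∧ τ < T + 1 + t0) → M (τ + 1) = Atil U (M τ) := by
    intro τ h1 h2
    obtain ⟨e1, e2, e3⟩ := hSz_out τ h2
    rw [hstepM τ, hLq_pos τ h1, e1, e2, e3, Cmap_zero, add_zero,
      show (0 : Pauli (Fin kc)) + 0 = 0 from zero_add 0, Emap_zero, add_zero]
  have hFA : ∀ j, j ≤ T → M (j + 1) = (Atil U)^[j] Ce := by
    intro j
    induction j with
    | zero =>
        intro _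
        have h1 : Lq 0 = e := by rw [hLqd]; simp
        obtain ⟨e1, e2, e3⟩ := hSz_out 0 (by omega)
        rw [hstepM 0, h1, e1, e2, e3, hM0, Atil_zero, zero_add,
          show (0 : Pauli (Fin kc)) + 0 = 0 from zero_add 0, Emap_zero, add_zero]
        rfl
    | succ j ih =>
        intro hj
        rw [hzero_step (j + 1) (by omega) (by omega), ih (by omega),
          ← Function.iterate_succ_apply' (Atil U) j Ce]
  have hFB : ∀ i, i ≤ t0 → M (T + 1 + i) = ptraj U x szR czR ggR i := by
    intro i
    induction i with
    | zero =>
        intro _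
        show M (T + 1) = ptraj U x szR czR ggR 0
        rw [hFA T le_rfl]
        show (Atil U)^[T] Ce = x
        rw [hxdef]
    | succ i ih =>
        intro hi
        have hc : T + 1 ≤ T + 1 + i ∧ T + 1 + i < T + 1 + t0 := by omega
        have hidx : T + 1 + i - (T + 1) = i := by omega
        have hs1 : Sz (T + 1 + i) = szR i := by rw [hSzd]; simp [hc, hidx]
        have hc1 : Cz (T + 1 + i) = czR i := by rw [hCzd]; simp [hc, hidx]
        have hg1 : Gg (T + 1 + i) = ggR i := by rw [hGgd]; simp [hc, hidx]
        rw [show T + 1 + (i + 1) = (T + 1 + i) + 1 by omega, hstepM, hLq_pos _ (by omega),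
          Cmap_zero, add_zero, hs1, hc1, hg1, ih (by omega), zero_add]
        rfl
  have hFD : ∀ d, M (T + 1 + t0 + d) = 0 := by
    intro d
    induction d with
    | zero =>
        show M (T + 1 + t0) = 0
        rw [hFB t0 le_rfl, hptraj0]
    | succ d ih =>
        rw [show T + 1 + t0 + (d + 1) = (T + 1 + t0 + d) + 1 by omega,
          hzero_step _ (by omega) (by omega), ih, Atil_zero]
  have hPzero : ∀ d, P (T + 1 + t0 + d) = 0 := by
    intro d
    obtain ⟨e1, e2, e3⟩ := hSz_out (T + 1 + t0 + d) (by omega)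
    rw [hPd]
    show outPhys (U (ceInput (M (T + 1 + t0 + d)) (Lq (T + 1 + t0 + d)) (Sz (T + 1 + t0 + d))
      (0 + Cz (T + 1 + t0 + d)) (Gg (T + 1 + t0 + d)))) = 0
    rw [hFD d, hLq_pos _ (by omega), e1, e2, e3,
      show (0 : Pauli (Fin kc)) + 0 = 0 from zero_add 0, ceInput_zero, map_zero]
    rfl
  have hcos : CEInCoset U Lq (fun _ => 0) P := by
    refine ⟨M, Sz, Cz, Gg, hM0, ?_, ?_, ?_⟩
    · intro τ
      rw [hSzd]
      by_cases h : T + 1 ≤ τ ∧ τ < T + 1 + t0 <;> simp only [h, and_self, ↓reduceIte, hszR, pureZ_zero]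
    · intro τ
      rw [hCzd]
      by_cases h : T + 1 ≤ τ ∧ τ < T + 1 + t0 <;> simp only [h, and_self, ↓reduceIte, hczR, pureZ_zero]
    · intro t
      exact ⟨hMsucc t, by rw [hPd]⟩
  have hinf : {t : ℕ | P t ≠ 0}.Infinite := by
    apply hrec Lq (fun _ => 0) (fun t => pureX_zero) ?_ P hcos
    refine ⟨0, ?_, ?_⟩
    · have h1 : Lq 0 = e := by rw [hLqd]; simp
      rw [h1, he]
      simp [pWeight_zero]
    · intro t ht
      exact ⟨hLq_pos t ht, rfl⟩
  have hfin : {t : ℕ | P t ≠ 0}.Finite := by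
    apply Set.Finite.subset (Set.finite_Iio (T + 1 + t0))
    intro τ hτ
    by_contra hge
    simp only [Set.mem_Iio, not_lt] at hge
    have hPτ : P τ = 0 := by
      have h := hPzero (τ - (T + 1 + t0))
      rwa [show T + 1 + t0 + (τ - (T + 1 + t0)) = τ by omega] at h
    exact hτ hPτ
  exact hfin.not_infinite hinf

/-- Every recursive classically-enhanced subsystem convolutional encoder
with at least one information qubit is catastrophic. -/
theorem recursive_CE_subsystem_encoder_is_catastrophic
    (hn : n = kq + a + kc + g) (hkq : 1 ≤ kq)
    (U : CEEnc m kq a kc g n)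
    (hsymp : ∀ v w, sympl (U v) (U w) = sympl v w)
    (hrec : CERecursive U) :
    CECatastrophic U := by
  classical
  obtain ⟨t0, ht0⟩ := Reach_stab U
  have hRA : ∀ x ∈ Reach U t0, Atil U x ∈ Reach U t0 := by
    intro x hx
    have h1 : Atil U x ∈ Reach U (t0 + 1) :=
      ⟨x, hx, 0, 0, 0, pureZ_zero, pureZ_zero, by rw [Emap_zero, add_zero]⟩
    rwa [ht0 1] at h1
  have hRaise : ∀ (u t : ℕ) (y : Pauli (Fin m)), (Atil U)^[t] y ∈ Reach U t0 →
      (Atil U)^[t + u] y ∈ Reach U t0 := by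
    intro u
    induction u with
    | zero => intro t y h; exact h
    | succ u ih =>
        intro t y h
        rw [show t + (u + 1) = (t + u) + 1 by omega, Function.iterate_succ_apply']
        exact hRA _ (ih t y h)
  have hF2cases : ∀ c : F2, c = 0 ∨ c = 1 := by decide
  set N : Submodule F2 (Pauli (Fin m)) :=
    { carrier := {y | ∃ t, (Atil U)^[t] y ∈ Reach U t0}
      add_mem' := by
        rintro y z ⟨ty, hy⟩ ⟨tz, hz⟩
        refine ⟨ty + tz, ?_⟩
        rw [Atil_iter_add]
        refine Reach_add U t0 _ _ (hRaise tz ty y hy) ?_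
        rw [Nat.add_comm]
        exact hRaise ty tz z hz
      zero_mem' := ⟨0, by rw [Function.iterate_zero_apply]; exact zero_mem_Reach U t0⟩
      smul_mem' := by
        intro c y hy
        rcases hF2cases c with rfl | rfl
        · rw [zero_smul]
          exact ⟨0, by rw [Function.iterate_zero_apply]; exact zero_mem_Reach U t0⟩
        · rw [one_smul]; exact hy } with hNd
  have hNmem : ∀ y : Pauli (Fin m), y ∈ N ↔ ∃ t, (Atil U)^[t] y ∈ Reach U t0 :=
    fun y => Iff.rfl
  -- the weight-one impulse
  set i0 : Fin kq := ⟨0, hkq⟩ with hi0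
  set e : Pauli (Fin kq) := Pi.single i0 ((1 : F2), (0 : F2)) with hed
  have he : pWeight e = 1 := by
    rw [pWeight]
    have hfe : (Finset.univ.filter fun i => e i ≠ 0) = {i0} := by
      ext j
      simp only [Finset.mem_filter, Finset.mem_univ, true_and, Finset.mem_singleton]
      rw [hed]
      rcases eq_or_ne j i0 with rfl | hj
      · simp only [Pi.single_eq_same]
        constructor
        · intro _; trivial
        · intro _; decide
      · simp [Pi.single_eq_of_ne hj, hj]
    rw [hfe, Finset.card_singleton]
  have hnotin : ∀ K', (Atil U)^[K'] (Cmap U e) ∉ N := by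
    intro K' hmem
    have hmem' : ∃ s, (Atil U)^[s] ((Atil U)^[K'] (Cmap U e)) ∈ Reach U t0 :=
      (hNmem _).1 hmem
    exact silencing U hrec ht0 e he K' hmem'
  obtain ⟨K, hKpos, hidem⟩ := exists_pow_idem (pim U)
  set v := (Atil U)^[K] (Cmap U e) with hvd
  have hvN : v ∉ N := hnotin K
  -- a linear functional separating v from N
  have hvq : Submodule.Quotient.mk (p := N) v ≠ (0 : Pauli (Fin m) ⧸ N) := by
    intro h
    exact hvN ((Submodule.Quotient.mk_eq_zero N).1 h)
  obtain ⟨φ, hφ⟩ : ∃ φ : Module.Dual F2 (Pauli (Fin m) ⧸ N),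
      φ (Submodule.Quotient.mk (p := N) v) ≠ 0 := by
    by_contra h
    push_neg at h
    exact hvq ((Module.forall_dual_apply_eq_zero_iff F2 _).1 h)
  set f : Pauli (Fin m) →ₗ[F2] F2 := φ.comp N.mkQ with hfd
  have hfv : f v = 1 := by
    apply F2.ne_zero_eq_one
    show φ (N.mkQ v) ≠ 0
    rw [Submodule.mkQ_apply]
    exact hφ
  have hfN : ∀ y ∈ N, f y = 0 := by
    intro y hy
    show φ (N.mkQ y) = 0
    rw [Submodule.mkQ_apply, (Submodule.Quotient.mk_eq_zero N).2 hy, map_zero]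
  -- the symplectic representative χ of f
  set χ : Pauli (Fin m) := fun i =>
    (f (Pi.single i ((0 : F2), (1 : F2))), f (Pi.single i ((1 : F2), (0 : F2)))) with hχd
  have hpairdec : ∀ x : F2 × F2,
      x.1 • (((1 : F2), (0 : F2)) : F2 × F2) + x.2 • (((0 : F2), (1 : F2)) : F2 × F2) = x := by
    decide
  have hχ : ∀ u : Pauli (Fin m), sympl u χ = f u := by
    intro u
    conv_rhs => rw [← Finset.univ_sum_single u, map_sum]
    unfold sympl
    apply Finset.sum_congr rfl
    intro i _
    conv_rhs => rw [← hpairdec (u i), Pi.single_add, Pi.single_smul, Pi.single_smul, map_add,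
      map_smul, map_smul]
    rw [smul_eq_mul, smul_eq_mul]
  -- orthogonality to N is preserved by the backward map
  set Pp : Pauli (Fin m) → Prop := fun ψ => ∀ y ∈ N, sympl y ψ = 0 with hPpd
  have hPχ : Pp χ := fun y hy => by rw [hχ y]; exact hfN y hy
  have hNA : ∀ y, y ∈ N → Atil U y ∈ N := by
    intro y hy
    obtain ⟨t, ht⟩ := (hNmem y).1 hy
    refine (hNmem _).2 ⟨t, ?_⟩
    rw [← Function.iterate_succ_apply, Function.iterate_succ_apply']
    exact hRA _ ht
  have hPpim : ∀ ψ, Pp ψ → Pp (pim U ψ) := by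
    intro ψ hψ y hy
    rw [← sympl_Atil U hsymp y ψ]
    exact hψ _ (hNA y hy)
  have hPiter : ∀ j, Pp ((pim U)^[j] χ) := by
    intro j
    induction j with
    | zero => exact hPχ
    | succ j ih => rw [Function.iterate_succ_apply']; exact hPpim _ ih
  have hEmapN : ∀ sz cz gg, pureZ sz → pureZ cz → Emap U sz cz gg ∈ N := by
    intro sz cz gg hsz hcz
    have h1 : Emap U sz cz gg ∈ Reach U 1 :=
      ⟨0, rfl, sz, cz, gg, hsz, hcz, by rw [Atil_zero, zero_add]⟩
    refine (hNmem _).2 ⟨0, ?_⟩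
    rw [Function.iterate_zero_apply]
    have h2 : Reach U 1 ⊆ Reach U (t0 + 1) := Reach_mono U (by omega)
    rw [ht0 1] at h2
    exact h2 h1
  have hαψ : ∀ ψ, Pp ψ → pureZ (alm U ψ) := by
    intro ψ hψ i
    have h0 := hψ _ (hEmapN (Pi.single i ((0 : F2), (1 : F2))) 0 0 (pureZ_single_z i) pureZ_zero)
    rw [sympl_Emap U hsymp, sympl_zero_left, sympl_zero_left, add_zero, add_zero,
      sympl_single_zx] at h0
    exact h0
  have hκψ : ∀ ψ, Pp ψ → pureZ (kam U ψ) := by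
    intro ψ hψ i
    have h0 := hψ _ (hEmapN 0 (Pi.single i ((0 : F2), (1 : F2))) 0 pureZ_zero (pureZ_single_z i))
    rw [sympl_Emap U hsymp, sympl_zero_left, sympl_zero_left, zero_add, add_zero,
      sympl_single_zx] at h0
    exact h0
  -- the cycle
  set χ' : Pauli (Fin m) := (pim U)^[K] χ with hχ'd
  have hper : (pim U)^[K] χ' = χ' := hidem χ
  have hpairv : sympl e (iom U χ') = 1 := by
    have h1 : sympl v χ = 1 := by rw [hχ v, hfv]
    rw [hvd, sympl_Atil_iter U hsymp K (Cmap U e) χ, sympl_Cmap U hsymp] at h1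
    exact h1
  have hine : iom U χ' ≠ 0 := by
    intro h
    rw [h, sympl_zero_right] at hpairv
    exact absurd hpairv (by decide)
  haveI : NeZero K := ⟨by omega⟩
  set Ms : ZMod K → Pauli (Fin m) := fun t => (pim U)^[K - t.val] χ' with hMsd
  have hMsPp : ∀ t, Pp (Ms t) := by
    intro t
    show Pp ((pim U)^[K - t.val] χ')
    rw [hχ'd, ← Function.iterate_add_apply]
    exact hPiter _
  have hMs0 : Ms 0 = χ' := by
    show (pim U)^[K - (0 : ZMod K).val] χ' = χ'
    rw [ZMod.val_zero, Nat.sub_zero]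
    exact hper
  have hstep : ∀ t : ZMod K, pim U (Ms (t + 1)) = Ms t := by
    intro t
    have htv : t.val < K := ZMod.val_lt t
    have hcast : (t + 1 : ZMod K) = ((t.val + 1 : ℕ) : ZMod K) := by
      rw [Nat.cast_add, Nat.cast_one, ZMod.natCast_val, ZMod.cast_id]
    by_cases hc : t.val + 1 < K
    · have h1 : (t + 1 : ZMod K).val = t.val + 1 := by
        rw [hcast, ZMod.val_cast_of_lt hc]
      show pim U ((pim U)^[K - (t + 1 : ZMod K).val] χ') = (pim U)^[K - t.val] χ'
      rw [h1]
      have h2 : K - t.val = (K - (t.val + 1)) + 1 := by omega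
      rw [h2, Function.iterate_succ_apply']
    · have hK1 : t.val + 1 = K := by omega
      have h1 : (t + 1 : ZMod K) = 0 := by
        rw [hcast, hK1, ZMod.natCast_self]
      rw [h1, hMs0]
      show pim U χ' = (pim U)^[K - t.val] χ'
      rw [show K - t.val = 1 by omega, Function.iterate_one]
  refine ⟨K, hKpos, Ms, fun t => iom U (Ms (t + 1)), fun _ => 0, fun _ => 0, ?_, ?_, ?_⟩
  · intro t
    show CEEdge U (Ms t) (Ms (t + 1)) (iom U (Ms (t + 1))) 0 0
    rw [← hstep t]
    exact back_edge U (Ms (t + 1)) (hαψ _ (hMsPp (t + 1))) (hκψ _ (hMsPp (t + 1)))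
  · intro t
    exact pWeight_zero
  · refine ⟨((K - 1 : ℕ) : ZMod K), ?_⟩
    show pWeight (iom U (Ms (((K - 1 : ℕ) : ZMod K) + 1))) + pWeight (0 : Pauli (Fin kc)) ≠ 0
    have hlast : (((K - 1 : ℕ) : ZMod K) + 1) = (0 : ZMod K) := by
      rw [show ((K - 1 : ℕ) : ZMod K) + 1 = (((K - 1) + 1 : ℕ) : ZMod K) by push_cast; ring,
        show K - 1 + 1 = K by omega, ZMod.natCast_self]
    rw [hlast, hMs0, pWeight_zero, add_zero]
    intro h0
    exact hine ((pWeight_eq_zero_iff _).1 h0)
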